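/- Let μ ∈ ℝ and v > 0, let X₁, X₂ be independent random variables each distributed N(μ, v), and define m(x) = E[|x − X₂|] for x ∈ ℝ. Then Var(m(X₁)) = v (1/3 + (2√3 − 4)/π). -/

import Mathlib

open MeasureTheory ProbabilityTheory Filter Set
open scoped NNReal ENNReal
noncomputable section
namespace GiniAux

def φg (z : ℝ) : ℝ := (Real.sqrt (2 * Real.pi))⁻¹ * Real.exp (-z ^ 2 / 2)

lemma φg_funeq : φg = fun z => (Real.sqrt (2 * Real.pi))⁻¹ * Real.exp (-(1/2) * z ^ 2) := by
  funext z; rw [φg]; ring_nf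

lemma φg_eq' (z : ℝ) : φg z = (Real.sqrt (2 * Real.pi))⁻¹ * Real.exp (-(1/2) * z ^ 2) := by
  rw [φg]; ring_nf

lemma φg_nonneg (z : ℝ) : 0 ≤ φg z :=
  mul_nonneg (inv_nonneg.2 (Real.sqrt_nonneg _)) (Real.exp_nonneg _)

lemma continuous_φg : Continuous φg := by
  unfold φg; fun_prop

lemma φg_le (z : ℝ) : φg z ≤ (Real.sqrt (2 * Real.pi))⁻¹ := by
  have h1 : Real.exp (-z ^ 2 / 2) ≤ 1 := Real.exp_le_one_iff.2 (by nlinarith [sq_nonneg z])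
  calc φg z ≤ (Real.sqrt (2 * Real.pi))⁻¹ * 1 :=
        mul_le_mul_of_nonneg_left h1 (by positivity)
    _ = _ := mul_one _

lemma abs_φg_le (z : ℝ) : |φg z| ≤ (Real.sqrt (2 * Real.pi))⁻¹ := by
  rw [abs_of_nonneg (φg_nonneg z)]; exact φg_le z

lemma hasDerivAt_φg (z : ℝ) : HasDerivAt φg (-z * φg z) z := by
  have h1 : HasDerivAt (fun z : ℝ => -z ^ 2 / 2) (-z) z := by
    have := ((hasDerivAt_pow 2 z).neg).div_const 2
    refine this.congr_deriv ?_
    norm_num; ring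
  have h2 := (h1.exp).const_mul (Real.sqrt (2 * Real.pi))⁻¹
  refine h2.congr_deriv ?_
  unfold φg; ring

lemma integrable_φg : Integrable φg := by
  rw [φg_funeq]
  exact (integrable_exp_neg_mul_sq (by norm_num : (0:ℝ) < 1/2)).const_mul _

lemma integral_φg : ∫ z, φg z = 1 := by
  rw [φg_funeq]
  rw [integral_const_mul, integral_gaussian]
  rw [show Real.pi / (1/2) = 2 * Real.pi by ring]
  rw [inv_mul_cancel₀]
  positivity

lemma integrable_zφg : Integrable (fun z => z * φg z) := by
  rw [φg_funeq]
  have := integrable_rpow_mul_exp_neg_mul_sq (by norm_num : (0:ℝ) < 1/2) (by norm_num : (-1:ℝ) < 1)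
  have h2 := this.const_mul (Real.sqrt (2 * Real.pi))⁻¹
  convert h2 using 2 with z
  rw [Real.rpow_one]; ring

lemma integrable_abs_mul_φg : Integrable (fun z => |z| * φg z) := by
  have := integrable_zφg.abs
  convert this using 2 with z
  rw [abs_mul, abs_of_nonneg (φg_nonneg z)]

lemma integrable_sq_mul_φg : Integrable (fun z => z ^ 2 * φg z) := by
  rw [φg_funeq]
  have := integrable_rpow_mul_exp_neg_mul_sq (by norm_num : (0:ℝ) < 1/2) (by norm_num : (-1:ℝ) < 2)
  have h2 := this.const_mul (Real.sqrt (2 * Real.pi))⁻¹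
  convert h2 using 2 with z
  rw [show ((2:ℝ) : ℝ) = ((2:ℕ) : ℝ) by norm_num, Real.rpow_natCast]
  ring

lemma integrable_φg_sq : Integrable (fun z => φg z ^ 2) := by
  have := integrable_φg.bdd_mul (c := (Real.sqrt (2 * Real.pi))⁻¹)
    (continuous_φg.aestronglyMeasurable) (Filter.Eventually.of_forall abs_φg_le)
  convert this using 2 with z
  ring

lemma integrable_φg_cube : Integrable (fun z => φg z ^ 3) := by
  have := integrable_φg_sq.bdd_mul (c := (Real.sqrt (2 * Real.pi))⁻¹)
    (continuous_φg.aestronglyMeasurable) (Filter.Eventually.of_forall abs_φg_le)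
  convert this using 2 with z
  ring

def Φg (t : ℝ) : ℝ := ∫ z in Iic t, φg z

lemma Φg_eq (t : ℝ) : Φg t = Φg 0 + ∫ z in (0:ℝ)..t, φg z := by
  rw [Φg, Φg, ← intervalIntegral.integral_Iic_sub_Iic integrable_φg.integrableOn integrable_φg.integrableOn]
  ring

lemma hasDerivAt_Φg (t : ℝ) : HasDerivAt Φg (φg t) t := by
  have h : HasDerivAt (fun u => ∫ z in (0:ℝ)..u, φg z) (φg t) t := by
    refine intervalIntegral.integral_hasDerivAt_right
      (integrable_φg.intervalIntegrable) ?_ continuous_φg.continuousAt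
    exact continuous_φg.stronglyMeasurable.stronglyMeasurableAtFilter
  have := h.const_add (Φg 0)
  refine this.congr_of_eventuallyEq ?_
  filter_upwards with u
  rw [Φg_eq u]

lemma continuous_Φg : Continuous Φg := by
  have : Differentiable ℝ Φg := fun t => (hasDerivAt_Φg t).differentiableAt
  exact this.continuous

lemma Φg_nonneg (t : ℝ) : 0 ≤ Φg t :=
  setIntegral_nonneg measurableSet_Iic (fun z _ => φg_nonneg z)

lemma Φg_le_one (t : ℝ) : Φg t ≤ 1 := by
  rw [← integral_φg]
  exact setIntegral_le_integral integrable_φg (Filter.Eventually.of_forall φg_nonneg)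

lemma tendsto_Φg_atTop : Tendsto Φg atTop (nhds 1) := by
  have h := (aecover_Iic (tendsto_id : Tendsto (id : ℝ → ℝ) atTop atTop)).integral_tendsto_of_countably_generated
    (f := φg) integrable_φg
  rwa [integral_φg] at h

lemma tendsto_Φg_atBot : Tendsto Φg atBot (nhds 0) := by
  have h := (aecover_Ioi (tendsto_id : Tendsto (id : ℝ → ℝ) atBot atBot)).integral_tendsto_of_countably_generated
    (f := φg) integrable_φg
  rw [integral_φg] at h
  have heq : ∀ t : ℝ, Φg t = 1 - ∫ z in Ioi t, φg z := by
    intro t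
    have h2 := integral_add_compl (measurableSet_Iic (a := t)) integrable_φg
    rw [compl_Iic] at h2
    have h3 := integral_φg
    rw [Φg]
    linarith
  have : Tendsto (fun t : ℝ => 1 - ∫ z in Ioi t, φg z) atBot (nhds 0) := by
    have := h.const_sub 1
    simpa using this
  exact this.congr (fun t => (heq t).symm)

def Ag (t : ℝ) : ℝ := 2 * Φg t - 1

lemma abs_Ag_le (t : ℝ) : |Ag t| ≤ 1 := by
  rw [abs_le, Ag]
  constructor <;> nlinarith [Φg_nonneg t, Φg_le_one t]

lemma continuous_Ag : Continuous Ag := by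
  exact (continuous_const.mul continuous_Φg).sub continuous_const

lemma hasDerivAt_Ag (t : ℝ) : HasDerivAt Ag (2 * φg t) t := by
  have := (hasDerivAt_Φg t).const_mul 2
  exact this.sub_const 1

lemma tendsto_Ag_atTop : Tendsto Ag atTop (nhds 1) := by
  have := (tendsto_Φg_atTop.const_mul 2).sub_const 1
  norm_num at this
  exact this

lemma tendsto_Ag_atBot : Tendsto Ag atBot (nhds (-1)) := by
  have := (tendsto_Φg_atBot.const_mul 2).sub_const 1
  norm_num at this
  exact this

lemma tendsto_φg_cocompact : Tendsto φg (Filter.cocompact ℝ) (nhds 0) := by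
  have h := tendsto_rpow_abs_mul_exp_neg_mul_sq_cocompact (by norm_num : (0:ℝ) < 1/2) 0
  have h2 := h.const_mul (Real.sqrt (2 * Real.pi))⁻¹
  rw [mul_zero] at h2
  refine h2.congr (fun z => ?_)
  rw [φg_funeq]
  simp [Real.rpow_zero]

lemma tendsto_φg_atTop : Tendsto φg atTop (nhds 0) :=
  tendsto_φg_cocompact.mono_left (by rw [cocompact_eq_atBot_atTop]; exact le_sup_right)

lemma tendsto_φg_atBot : Tendsto φg atBot (nhds 0) :=
  tendsto_φg_cocompact.mono_left (by rw [cocompact_eq_atBot_atTop]; exact le_sup_left)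

lemma tendsto_zφg_cocompact : Tendsto (fun z => z * φg z) (Filter.cocompact ℝ) (nhds 0) := by
  have h := tendsto_rpow_abs_mul_exp_neg_mul_sq_cocompact (by norm_num : (0:ℝ) < 1/2) 1
  have h2 := h.const_mul (Real.sqrt (2 * Real.pi))⁻¹
  rw [mul_zero] at h2
  refine squeeze_zero_norm (fun z => ?_) h2
  rw [Real.norm_eq_abs, abs_mul, abs_of_nonneg (φg_nonneg z), φg_eq']
  rw [Real.rpow_one]
  ring_nf
  exact le_refl _

lemma tendsto_zφg_atTop : Tendsto (fun z => z * φg z) atTop (nhds 0) :=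
  tendsto_zφg_cocompact.mono_left (by rw [cocompact_eq_atBot_atTop]; exact le_sup_right)

lemma tendsto_zφg_atBot : Tendsto (fun z => z * φg z) atBot (nhds 0) :=
  tendsto_zφg_cocompact.mono_left (by rw [cocompact_eq_atBot_atTop]; exact le_sup_left)

lemma integrable_Ag_mul {f : ℝ → ℝ} (hf : Integrable f) : Integrable (fun z => Ag z * f z) :=
  hf.bdd_mul (c := 1) continuous_Ag.aestronglyMeasurable
    (Filter.Eventually.of_forall (fun z => by simpa using abs_Ag_le z))

lemma integrable_Ag_sq_mul {f : ℝ → ℝ} (hf : Integrable f) : Integrable (fun z => Ag z ^ 2 * f z) :=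
  hf.bdd_mul (c := 1) (continuous_Ag.pow 2).aestronglyMeasurable
    (Filter.Eventually.of_forall (fun z => by
      have := abs_Ag_le z
      rw [Real.norm_eq_abs, abs_pow]
      exact pow_le_one₀ (abs_nonneg _) this))

lemma integrable_zAφ : Integrable (fun z => z * Ag z * φg z) := by
  have := integrable_Ag_mul integrable_zφg
  refine this.congr ?_
  filter_upwards with z
  ring

lemma integrable_zφsq : Integrable (fun z => z * φg z ^ 2) := by
  have := integrable_zφg.bdd_mul (c := (Real.sqrt (2 * Real.pi))⁻¹)
    continuous_φg.aestronglyMeasurable (Filter.Eventually.of_forall abs_φg_le)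
  refine this.congr ?_
  filter_upwards with z
  ring

lemma integrable_zφsqA : Integrable (fun z => z * φg z ^ 2 * Ag z) := by
  have := integrable_Ag_mul integrable_zφsq
  refine this.congr ?_
  filter_upwards with z
  ring

lemma integrable_A2φ : Integrable (fun z => Ag z ^ 2 * φg z) := integrable_Ag_sq_mul integrable_φg

lemma integrable_z2A2φ : Integrable (fun z => z ^ 2 * Ag z ^ 2 * φg z) := by
  have := integrable_Ag_sq_mul integrable_sq_mul_φg
  refine this.congr ?_
  filter_upwards with z
  ring

lemma integrable_sub_mul_φg (t : ℝ) : Integrable (fun z => (t - z) * φg z) := by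
  have h : Integrable (fun z => t * φg z - z * φg z) :=
    (integrable_φg.const_mul t).sub integrable_zφg
  refine h.congr ?_
  filter_upwards with z
  ring

lemma integrable_abs_sub_mul_φg (t : ℝ) : Integrable (fun z => |t - z| * φg z) := by
  have h : Integrable (fun z => |t| * φg z + |z| * φg z) :=
    (integrable_φg.const_mul _).add integrable_abs_mul_φg
  refine h.mono (((continuous_const.sub continuous_id).abs.mul continuous_φg).aestronglyMeasurable) ?_
  filter_upwards with z
  have h1 : |t - z| ≤ |t| + |z| := by
    rw [sub_eq_add_neg]
    exact (abs_add_le t (-z)).trans (by rw [abs_neg])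
  have h2 := φg_nonneg z
  have h3 : (0:ℝ) ≤ |t| * φg z + |z| * φg z := by positivity
  rw [Real.norm_eq_abs, Real.norm_eq_abs, abs_mul, abs_abs, abs_of_nonneg h2, abs_of_nonneg h3]
  nlinarith [abs_nonneg (t - z)]

lemma integral_W (t : ℝ) : ∫ z, |t - z| * φg z = t * Ag t + 2 * φg t := by
  have hsplit := integral_add_compl (measurableSet_Iic (a := t)) (integrable_abs_sub_mul_φg t)
  rw [compl_Iic] at hsplit
  have hIic : ∫ z in Iic t, |t - z| * φg z = t * Φg t + φg t := by
    have e1 : EqOn (fun z => |t - z| * φg z) (fun z => (t - z) * φg z) (Iic t) := by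
      intro z hz
      simp only
      rw [abs_of_nonneg (by simp only [mem_Iic] at hz; linarith)]
    rw [setIntegral_congr_fun measurableSet_Iic e1]
    have hF : ∀ x ∈ Iic t, HasDerivAt (fun z => t * Φg z + φg z) ((t - x) * φg x) x := by
      intro x _
      have := ((hasDerivAt_Φg x).const_mul t).add (hasDerivAt_φg x)
      refine this.congr_deriv ?_
      ring
    have hbot : Tendsto (fun z => t * Φg z + φg z) atBot (nhds 0) := by
      have := (tendsto_Φg_atBot.const_mul t).add tendsto_φg_atBot
      simpa using this
    have := integral_Iic_of_hasDerivAt_of_tendsto' hF (integrable_sub_mul_φg t).integrableOn hbot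
    rw [this]
    ring
  have hIoi : ∫ z in Ioi t, |t - z| * φg z = φg t + t * Φg t - t := by
    have e1 : EqOn (fun z => |t - z| * φg z) (fun z => (z - t) * φg z) (Ioi t) := by
      intro z hz
      simp only
      rw [abs_of_nonpos (by simp only [mem_Ioi] at hz; linarith), neg_sub]
    rw [setIntegral_congr_fun measurableSet_Ioi e1]
    have hF : ∀ x ∈ Ici t, HasDerivAt (fun z => -φg z - t * Φg z) ((x - t) * φg x) x := by
      intro x _
      have := ((hasDerivAt_φg x).neg).sub ((hasDerivAt_Φg x).const_mul t)
      refine this.congr_deriv ?_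
      ring
    have htop : Tendsto (fun z => -φg z - t * Φg z) atTop (nhds (-t)) := by
      have := (tendsto_φg_atTop.neg).sub (tendsto_Φg_atTop.const_mul t)
      simpa using this
    have hint : IntegrableOn (fun z => (z - t) * φg z) (Ioi t) := by
      have h4 : Integrable (fun z => -((t - z) * φg z)) := (integrable_sub_mul_φg t).neg
      have : Integrable (fun z => (z - t) * φg z) := by
        refine h4.congr ?_
        filter_upwards with z
        ring
      exact this.integrableOn
    have := integral_Ioi_of_hasDerivAt_of_tendsto' hF hint htop
    rw [this]
    ring
  have : Φg t = ∫ z in Iic t, φg z := rfl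
  have hΦ := this
  rw [hIic, hIoi] at hsplit
  unfold Ag
  linarith [hsplit]

lemma integral_zAφ : ∫ z, z * Ag z * φg z = 2 * ∫ z, φg z ^ 2 := by
  have hderiv : ∀ x : ℝ, HasDerivAt (fun z => -(φg z * Ag z))
      (x * Ag x * φg x - 2 * φg x ^ 2) x := by
    intro x
    have := ((hasDerivAt_φg x).mul (hasDerivAt_Ag x)).neg
    refine this.congr_deriv ?_
    ring
  have hint : Integrable (fun x => x * Ag x * φg x - 2 * φg x ^ 2) :=
    integrable_zAφ.sub (integrable_φg_sq.const_mul 2)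
  have hbot : Tendsto (fun z => -(φg z * Ag z)) atBot (nhds 0) := by
    have := (tendsto_φg_atBot.mul tendsto_Ag_atBot).neg
    simpa using this
  have htop : Tendsto (fun z => -(φg z * Ag z)) atTop (nhds 0) := by
    have := (tendsto_φg_atTop.mul tendsto_Ag_atTop).neg
    simpa using this
  have h0 := integral_of_hasDerivAt_of_tendsto hderiv hint hbot htop
  rw [sub_zero] at h0
  rw [integral_sub integrable_zAφ (integrable_φg_sq.const_mul 2), integral_const_mul] at h0
  linarith

lemma integral_A2φ : ∫ z, Ag z ^ 2 * φg z = 1 / 3 := by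
  have hderiv : ∀ x : ℝ, HasDerivAt (fun z => Ag z ^ 3 / 6) (Ag x ^ 2 * φg x) x := by
    intro x
    have := ((hasDerivAt_Ag x).pow 3).div_const 6
    refine this.congr_deriv ?_
    ring
  have hbot : Tendsto (fun z => Ag z ^ 3 / 6) atBot (nhds (-1 / 6)) := by
    have := (tendsto_Ag_atBot.pow 3).div_const 6
    norm_num at this
    convert this using 2
    norm_num
  have htop : Tendsto (fun z => Ag z ^ 3 / 6) atTop (nhds (1 / 6)) := by
    have := (tendsto_Ag_atTop.pow 3).div_const 6
    norm_num at this
    exact this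
  have h0 := integral_of_hasDerivAt_of_tendsto hderiv integrable_A2φ hbot htop
  rw [h0]
  norm_num

lemma integral_zφsqA : ∫ z, z * φg z ^ 2 * Ag z = ∫ z, φg z ^ 3 := by
  have hderiv : ∀ x : ℝ, HasDerivAt (fun z => -(φg z ^ 2 * Ag z) / 2)
      (x * φg x ^ 2 * Ag x - φg x ^ 3) x := by
    intro x
    have := (((hasDerivAt_φg x).pow 2).mul (hasDerivAt_Ag x)).neg.div_const 2
    refine this.congr_deriv ?_
    simp only [Pi.pow_apply]; ring
  have hint : Integrable (fun x => x * φg x ^ 2 * Ag x - φg x ^ 3) :=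
    integrable_zφsqA.sub integrable_φg_cube
  have hbot : Tendsto (fun z => -(φg z ^ 2 * Ag z) / 2) atBot (nhds 0) := by
    have := (((tendsto_φg_atBot.pow 2).mul tendsto_Ag_atBot).neg).div_const 2
    simpa using this
  have htop : Tendsto (fun z => -(φg z ^ 2 * Ag z) / 2) atTop (nhds 0) := by
    have := (((tendsto_φg_atTop.pow 2).mul tendsto_Ag_atTop).neg).div_const 2
    simpa using this
  have h0 := integral_of_hasDerivAt_of_tendsto hderiv hint hbot htop
  rw [sub_zero] at h0
  rw [integral_sub integrable_zφsqA integrable_φg_cube] at h0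
  linarith

lemma integral_z2A2φ : ∫ z, z ^ 2 * Ag z ^ 2 * φg z = 1 / 3 + 4 * ∫ z, φg z ^ 3 := by
  have hderiv : ∀ x : ℝ, HasDerivAt (fun z => -(z * φg z * Ag z ^ 2))
      (x ^ 2 * Ag x ^ 2 * φg x - Ag x ^ 2 * φg x - 4 * (x * φg x ^ 2 * Ag x)) x := by
    intro x
    have h1 : HasDerivAt (fun z : ℝ => z * φg z) (1 * φg x + x * (-x * φg x)) x :=
      (hasDerivAt_id x).mul (hasDerivAt_φg x)
    have := (h1.mul ((hasDerivAt_Ag x).pow 2)).neg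
    refine this.congr_deriv ?_
    simp only [Pi.pow_apply]; ring
  have hint : Integrable (fun x => x ^ 2 * Ag x ^ 2 * φg x - Ag x ^ 2 * φg x
      - 4 * (x * φg x ^ 2 * Ag x)) :=
    (integrable_z2A2φ.sub integrable_A2φ).sub (integrable_zφsqA.const_mul 4)
  have hbot : Tendsto (fun z => -(z * φg z * Ag z ^ 2)) atBot (nhds 0) := by
    have := (tendsto_zφg_atBot.mul (tendsto_Ag_atBot.pow 2)).neg
    simpa using this
  have htop : Tendsto (fun z => -(z * φg z * Ag z ^ 2)) atTop (nhds 0) := by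
    have := (tendsto_zφg_atTop.mul (tendsto_Ag_atTop.pow 2)).neg
    simpa using this
  have h0 := integral_of_hasDerivAt_of_tendsto hderiv hint hbot htop
  rw [sub_zero] at h0
  have i1 : Integrable (fun x => x ^ 2 * Ag x ^ 2 * φg x - Ag x ^ 2 * φg x) :=
    integrable_z2A2φ.sub integrable_A2φ
  have i2 : Integrable (fun x => 4 * (x * φg x ^ 2 * Ag x)) := integrable_zφsqA.const_mul 4
  rw [integral_sub i1 i2, integral_sub integrable_z2A2φ integrable_A2φ, integral_const_mul,
    integral_A2φ, integral_zφsqA] at h0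
  linarith

lemma sq_sqrt_two_pi : Real.sqrt (2 * Real.pi) ^ 2 = 2 * Real.pi :=
  Real.sq_sqrt (by positivity)

lemma integral_φg_sq : ∫ z, φg z ^ 2 = (2 * Real.pi)⁻¹ * Real.sqrt Real.pi := by
  have h : (fun z : ℝ => φg z ^ 2)
      = fun z => (2 * Real.pi)⁻¹ * Real.exp (-1 * z ^ 2) := by
    funext z
    rw [φg, mul_pow, ← Real.exp_nat_mul, inv_pow, sq_sqrt_two_pi]
    ring_nf
  rw [h, integral_const_mul, integral_gaussian]
  norm_num

lemma integral_φg_cube : ∫ z, φg z ^ 3 = ((2 * Real.pi) * Real.sqrt 3)⁻¹ := by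
  have h : (fun z : ℝ => φg z ^ 3)
      = fun z => ((Real.sqrt (2 * Real.pi))⁻¹) ^ 3 * Real.exp (-(3/2) * z ^ 2) := by
    funext z
    rw [φg, mul_pow]
    congr 1
    rw [← Real.exp_nat_mul]
    congr 1
    ring
  rw [h, integral_const_mul, integral_gaussian]
  have h1 : Real.pi / (3/2) = 2 * Real.pi / 3 := by ring
  rw [h1]
  have hsb : Real.sqrt (2 * Real.pi / 3) * Real.sqrt 3 = Real.sqrt (2 * Real.pi) := by
    rw [← Real.sqrt_mul (by positivity)]
    norm_num
  have ha : 0 < Real.sqrt (2 * Real.pi) := Real.sqrt_pos.2 (by positivity)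
  have hb : 0 < Real.sqrt 3 := Real.sqrt_pos.2 (by norm_num)
  have hs : 0 ≤ Real.sqrt (2 * Real.pi / 3) := Real.sqrt_nonneg _
  have ha2 := sq_sqrt_two_pi
  have hq : Real.sqrt (2 * Real.pi / 3) = Real.sqrt (2 * Real.pi) / Real.sqrt 3 := by
    rw [eq_div_iff hb.ne', hsb]
  rw [inv_pow, hq]
  set a := Real.sqrt (2 * Real.pi) with ha'
  rw [← ha2]
  field_simp

/-- the function `g(z) = E|z - Z|` for standard normal -/
def gg (z : ℝ) : ℝ := z * Ag z + 2 * φg z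

lemma continuous_gg : Continuous gg :=
  ((continuous_id.mul continuous_Ag).add (continuous_const.mul continuous_φg))

lemma integrable_ggφ : Integrable (fun z => gg z * φg z) := by
  have h : Integrable (fun z => z * Ag z * φg z + 2 * (φg z * φg z)) := by
    refine integrable_zAφ.add ?_
    have := integrable_φg_sq.const_mul 2
    refine this.congr ?_
    filter_upwards with z
    ring
  refine h.congr ?_
  filter_upwards with z
  rw [gg]
  ring

lemma integral_ggφ : ∫ z, gg z * φg z = 2 / Real.sqrt Real.pi := by
  have h : (fun z => gg z * φg z) = fun z => z * Ag z * φg z + 2 * φg z ^ 2 := by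
    funext z
    rw [gg]
    ring
  rw [h, integral_add integrable_zAφ (integrable_φg_sq.const_mul 2), integral_zAφ,
    integral_const_mul, integral_φg_sq]
  rw [show (2:ℝ) * ((2 * Real.pi)⁻¹ * Real.sqrt Real.pi) + 2 * ((2 * Real.pi)⁻¹ * Real.sqrt Real.pi)
    = 4 * Real.sqrt Real.pi * (2 * Real.pi)⁻¹ by ring]
  have hπ : Real.pi = Real.sqrt Real.pi ^ 2 := (Real.sq_sqrt Real.pi_pos.le).symm
  have hs : 0 < Real.sqrt Real.pi := Real.sqrt_pos.2 Real.pi_pos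
  field_simp
  nlinarith [hs]

lemma integrable_ggsqφ : Integrable (fun z => gg z ^ 2 * φg z) := by
  have h : Integrable (fun z => z ^ 2 * Ag z ^ 2 * φg z + 4 * (z * φg z ^ 2 * Ag z)
      + 4 * (φg z ^ 2 * φg z)) := by
    refine (integrable_z2A2φ.add (integrable_zφsqA.const_mul 4)).add ?_
    have := integrable_φg_cube.const_mul 4
    refine this.congr ?_
    filter_upwards with z
    ring
  refine h.congr ?_
  filter_upwards with z
  rw [gg]
  ring

lemma integral_ggsqφ : ∫ z, gg z ^ 2 * φg z = 1 / 3 + 2 * Real.sqrt 3 / Real.pi := by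
  have h : (fun z => gg z ^ 2 * φg z) = fun z => z ^ 2 * Ag z ^ 2 * φg z
      + (4 * (z * φg z ^ 2 * Ag z) + 4 * φg z ^ 3) := by
    funext z
    rw [gg]
    ring
  have i2 : Integrable (fun z => 4 * (z * φg z ^ 2 * Ag z) + 4 * φg z ^ 3) :=
    (integrable_zφsqA.const_mul 4).add (integrable_φg_cube.const_mul 4)
  rw [h, integral_add integrable_z2A2φ i2,
    integral_add (integrable_zφsqA.const_mul 4) (integrable_φg_cube.const_mul 4),
    integral_const_mul, integral_const_mul, integral_z2A2φ, integral_zφsqA, integral_φg_cube]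
  have h3 : Real.sqrt 3 ^ 2 = 3 := Real.sq_sqrt (by norm_num)
  have hs : 0 < Real.sqrt 3 := Real.sqrt_pos.2 (by norm_num)
  field_simp
  linear_combination (-12) * h3

lemma gaussianPDFReal_std_eq : gaussianPDFReal 0 1 = φg := by
  funext x
  rw [gaussianPDFReal, φg]
  norm_num

lemma integral_std (f : ℝ → ℝ) : ∫ x, f x ∂(gaussianReal 0 1) = ∫ x, f x * φg x := by
  rw [gaussianReal_of_var_ne_zero 0 one_ne_zero]
  have hd : (gaussianPDF 0 1) = fun x => ((Real.toNNReal (φg x) : ℝ≥0) : ℝ≥0∞) := by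
    funext x
    rw [gaussianPDF, gaussianPDFReal_std_eq, ENNReal.ofReal]
  rw [hd, integral_withDensity_eq_integral_smul
    (continuous_φg.measurable.real_toNNReal) f]
  congr 1
  funext x
  rw [NNReal.smul_def, Real.coe_toNNReal _ (φg_nonneg x), smul_eq_mul, mul_comm]

lemma integrable_std_iff (f : ℝ → ℝ) (hf : Measurable f) :
    Integrable f (gaussianReal 0 1) ↔ Integrable (fun x => f x * φg x) := by
  rw [gaussianReal_of_var_ne_zero 0 one_ne_zero]
  have hd : (gaussianPDF 0 1) = fun x => ENNReal.ofReal (φg x) := by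
    funext x
    rw [gaussianPDF, gaussianPDFReal_std_eq]
  rw [hd, integrable_withDensity_iff ((by exact ENNReal.measurable_ofReal.comp continuous_φg.measurable : Measurable fun x => ENNReal.ofReal (φg x))) (Filter.Eventually.of_forall
    (fun x => ENNReal.ofReal_lt_top))]
  constructor
  · intro h
    refine h.congr ?_
    filter_upwards with x
    rw [ENNReal.toReal_ofReal (φg_nonneg x)]
  · intro h
    refine h.congr ?_
    filter_upwards with x
    rw [ENNReal.toReal_ofReal (φg_nonneg x)]

lemma memLp_gg : MemLp gg 2 (gaussianReal 0 1) := by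
  rw [memLp_two_iff_integrable_sq continuous_gg.aestronglyMeasurable]
  rw [show (fun x => gg x ^ 2) = fun x => gg x ^ 2 from rfl]
  rw [integrable_std_iff _ (by
    have := continuous_gg.pow 2
    exact this.measurable)]
  exact integrable_ggsqφ

lemma nnreal_sq_sqrt (v : ℝ≥0) : (⟨(Real.sqrt (v:ℝ)) ^ 2, sq_nonneg _⟩ : ℝ≥0) = v := by
  apply NNReal.coe_injective
  exact Real.sq_sqrt v.coe_nonneg

lemma map_affine_std (μ : ℝ) (v : ℝ≥0) :
    Measure.map (fun z => Real.sqrt (v:ℝ) * z + μ) (gaussianReal 0 1) = gaussianReal μ v := by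
  set c := Real.sqrt (v:ℝ) with hc'
  have h0 : (fun z : ℝ => c * z + μ) = (fun x : ℝ => x + μ) ∘ (fun z : ℝ => c * z) := rfl
  rw [h0, ← Measure.map_map (measurable_add_const μ) (measurable_const_mul c)]
  rw [gaussianReal_map_const_mul c, mul_zero, mul_one,
    show NNReal.mk (c ^ 2) (sq_nonneg _) = v by
      apply NNReal.coe_injective; exact Real.sq_sqrt v.coe_nonneg,
    gaussianReal_map_add_const μ, zero_add]


end GiniAux

open GiniAux in
/-- projection variance of the Gini-mean-difference kernel under a
Gaussian. If `X₁, X₂` are independent `N(μ, v)` with `v > 0` and `m(x) = E|x − X₂|`, then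
`Var(m(X₁)) = v (1/3 + (2√3 − 4)/π)`. -/
theorem gini_projection_variance_gaussian
    {Ω : Type*} [MeasurableSpace Ω] (P : Measure Ω) [IsProbabilityMeasure P]
    (μ : ℝ) (v : ℝ≥0) (hv : 0 < v)
    (X₁ X₂ : Ω → ℝ) (hX₁ : Measurable X₁) (hX₂ : Measurable X₂)
    (hindep : IndepFun X₁ X₂ P)
    (hlaw₁ : Measure.map X₁ P = gaussianReal μ v)
    (hlaw₂ : Measure.map X₂ P = gaussianReal μ v)
    (m : ℝ → ℝ) (hm : ∀ x, m x = ∫ ω, |x - X₂ ω| ∂P) :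
    variance (fun ω => m (X₁ ω)) P =
      (v : ℝ) * (1 / 3 + (2 * Real.sqrt 3 - 4) / Real.pi) := by
  have hvr : (0:ℝ) < (v:ℝ) := hv
  set c := Real.sqrt (v:ℝ) with hc'
  have hc : 0 < c := Real.sqrt_pos.2 hvr
  have hc2 : c ^ 2 = (v:ℝ) := Real.sq_sqrt v.coe_nonneg
  set Z : Ω → ℝ := fun ω => c⁻¹ * (X₁ ω - μ) with hZ'
  have hZmeas : Measurable Z := (hX₁.sub_const μ).const_mul c⁻¹
  -- law of Z is standard normal
  have hmapZ : Measure.map Z P = gaussianReal 0 1 := by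
    have h0 : Z = (fun x : ℝ => c⁻¹ * x) ∘ ((fun x : ℝ => x + (-μ)) ∘ X₁) := by
      funext ω
      simp [hZ', sub_eq_add_neg]
    rw [h0, ← Measure.map_map (measurable_const_mul c⁻¹) ((measurable_add_const (-μ)).comp hX₁),
      ← Measure.map_map (measurable_add_const (-μ)) hX₁, hlaw₁,
      gaussianReal_map_add_const (-μ), add_neg_cancel, gaussianReal_map_const_mul,
      mul_zero]
    congr 1
    apply NNReal.coe_injective
    have hvne : (v:ℝ) ≠ 0 := ne_of_gt hvr
    push_cast
    rw [inv_pow, Real.sq_sqrt (v.coe_nonneg)]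
    field_simp
  -- closed form for m
  have hm2 : ∀ x, m x = c * gg (c⁻¹ * (x - μ)) := by
    intro x
    rw [hm x]
    have hcontabs : Continuous (fun y : ℝ => |x - y|) := by continuity
    have h1 : ∫ ω, |x - X₂ ω| ∂P = ∫ y, |x - y| ∂(gaussianReal μ v) := by
      rw [← hlaw₂]
      exact (integral_map hX₂.aemeasurable hcontabs.aestronglyMeasurable).symm
    rw [h1, ← map_affine_std μ v, integral_map
      ((by fun_prop : Measurable (fun z : ℝ => Real.sqrt (v:ℝ) * z + μ)).aemeasurable)
      hcontabs.aestronglyMeasurable]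
    have h2 : ∀ z : ℝ, |x - (c * z + μ)| = c * |c⁻¹ * (x - μ) - z| := by
      intro z
      have key : c * |c⁻¹ * (x - μ) - z| = |c * (c⁻¹ * (x - μ) - z)| := by
        rw [abs_mul, abs_of_pos hc]
      rw [key]
      congr 1
      field_simp
      ring
    simp_rw [← hc', h2]
    rw [integral_const_mul, integral_std, integral_W]
    rfl
  have hfun : (fun ω => m (X₁ ω)) = fun ω => c * gg (Z ω) := by
    funext ω
    rw [hm2]
  rw [hfun]
  -- variance computation
  have hmemg : MemLp (fun ω => gg (Z ω)) 2 P := by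
    have h := memLp_gg
    rw [← hmapZ] at h
    exact (memLp_map_measure_iff continuous_gg.aestronglyMeasurable hZmeas.aemeasurable).mp h
  have hmem : MemLp (fun ω => c * gg (Z ω)) 2 P := hmemg.const_mul c
  rw [variance_eq_sub hmem]
  have hint1 : ∫ ω, c * gg (Z ω) ∂P = c * (2 / Real.sqrt Real.pi) := by
    rw [integral_const_mul]
    congr 1
    rw [← integral_ggφ, ← integral_std]
    rw [← hmapZ, integral_map hZmeas.aemeasurable continuous_gg.aestronglyMeasurable]
  have hint2 : ∫ ω, (c * gg (Z ω)) ^ 2 ∂P = c ^ 2 * (1 / 3 + 2 * Real.sqrt 3 / Real.pi) := by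
    have he : (fun ω => (c * gg (Z ω)) ^ 2) = fun ω => c ^ 2 * (gg (Z ω) ^ 2) := by
      funext ω
      ring
    rw [he, integral_const_mul]
    congr 1
    rw [← integral_ggsqφ, ← integral_std]
    rw [← hmapZ]; exact (integral_map hZmeas.aemeasurable
      ((continuous_gg.pow 2).aestronglyMeasurable)).symm
  have hpow : ∫ ω, ((fun ω => c * gg (Z ω)) ^ 2) ω ∂P = ∫ ω, (c * gg (Z ω)) ^ 2 ∂P := by
    congr 1
  rw [hpow, hint2, hint1]
  have hπ : Real.sqrt Real.pi ^ 2 = Real.pi := Real.sq_sqrt Real.pi_pos.le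
  have hπ0 : Real.pi ≠ 0 := Real.pi_ne_zero
  have hs : Real.sqrt Real.pi ≠ 0 := by
    intro h
    rw [h] at hπ
    simp at hπ
    exact hπ0 hπ.symm
  rw [mul_pow, div_pow, hπ, hc2]
  field_simp
  ring
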